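/- Let d ≥ 1 and let W : ℝ^{d×d} → ℝ be differentiable on the open set GL⁺(d) and frame indifferent, i.e. W(QF) = W(F) for all Q ∈ SO(d) and all F ∈ GL⁺(d). Fix F ∈ GL⁺(d) and let S ∈ ℝ^{d×d} be the matrix representing the Fréchet derivative of W at F, i.e. the derivative of W at F applied to G ∈ ℝ^{d×d} equals S : G. Then for every Ḟ ∈ ℝ^{d×d} one has S : Ḟ = (1/2) (F⁻¹ S) : (Ḟᵀ F + Fᵀ Ḟ). -/

import Mathlib

attribute [local instance] Matrix.frobeniusNormedAddCommGroup Matrix.frobeniusNormedSpace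

open Matrix

/-- If `W` is differentiable on `GL⁺(d)` and frame indifferent, and `S` represents
the Fréchet derivative of `W` at `F ∈ GL⁺(d)` with respect to the Frobenius inner
product `A : B = trace(Aᵀ B)`, then for every `Fdot` one has
`S : Fdot = (1/2) (F⁻¹ S) : (Fdotᵀ F + Fᵀ Fdot)`. -/
theorem frame_indifference_stress_pairing {d : ℕ} (hd : 1 ≤ d)
    (W : Matrix (Fin d) (Fin d) ℝ → ℝ)
    (hWdiff : DifferentiableOn ℝ W {F : Matrix (Fin d) (Fin d) ℝ | 0 < F.det})
    (hWframe : ∀ Q F : Matrix (Fin d) (Fin d) ℝ,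
      Qᵀ * Q = 1 → Q.det = 1 → 0 < F.det → W (Q * F) = W F)
    (F S : Matrix (Fin d) (Fin d) ℝ) (hF : 0 < F.det)
    (L : Matrix (Fin d) (Fin d) ℝ →L[ℝ] ℝ)
    (hL : HasFDerivAt W L F)
    (hLS : ∀ G : Matrix (Fin d) (Fin d) ℝ, L G = Matrix.trace (Sᵀ * G)) :
    ∀ Fdot : Matrix (Fin d) (Fin d) ℝ,
      Matrix.trace (Sᵀ * Fdot) =
        (1 / 2) * Matrix.trace ((F⁻¹ * S)ᵀ * (Fdotᵀ * F + Fᵀ * Fdot)) := by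
  intro Fdot
  letI : NormedRing (Matrix (Fin d) (Fin d) ℝ) := Matrix.frobeniusNormedRing
  letI : NormedAlgebra ℝ (Matrix (Fin d) (Fin d) ℝ) := Matrix.frobeniusNormedAlgebra
  -- Step 1: frame indifference kills skew directions
  have key : ∀ A : Matrix (Fin d) (Fin d) ℝ, Aᵀ = -A → L (A * F) = 0 := by
    intro A hA
    have horth : ∀ t : ℝ, (NormedSpace.exp (t • A))ᵀ * NormedSpace.exp (t • A) = 1 := by
      intro t
      have h1 : (NormedSpace.exp (t • A))ᵀ = NormedSpace.exp (-(t • A)) := by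
        rw [← Matrix.exp_transpose, transpose_smul, hA, smul_neg]
      rw [h1, Matrix.exp_neg]
      exact Matrix.nonsing_inv_mul _
        ((Matrix.isUnit_iff_isUnit_det _).mp (Matrix.isUnit_exp _))
    have hdet : ∀ t : ℝ, (NormedSpace.exp (t • A)).det = 1 := by
      intro t
      have hsq : (NormedSpace.exp (t • A)).det ^ 2 = 1 := by
        have h := congrArg Matrix.det (horth t)
        rwa [det_mul, det_transpose, ← sq, det_one] at h
      have h2 : NormedSpace.exp (t • A)
          = NormedSpace.exp ((t/2) • A) * NormedSpace.exp ((t/2) • A) := by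
        rw [← Matrix.exp_add_of_commute _ _ (Commute.refl _), ← add_smul]
        norm_num
      have hnonneg : 0 ≤ (NormedSpace.exp (t • A)).det := by
        rw [h2, det_mul]
        exact mul_self_nonneg _
      nlinarith [hsq, hnonneg]
    have hconst : ∀ t : ℝ, W (NormedSpace.exp (t • A) * F) = W F := fun t =>
      hWframe _ F (horth t) (hdet t) hF
    have h1 : HasDerivAt (fun t : ℝ => NormedSpace.exp (t • A))
        (NormedSpace.exp ((0:ℝ) • A) * A) 0 := hasDerivAt_exp_smul_const A 0
    have h2 : HasDerivAt (fun t : ℝ => NormedSpace.exp (t • A) * F) (A * F) 0 := by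
      exact (h1.mul_const F).congr_deriv (by simp [NormedSpace.exp_zero])
    have hγ0 : NormedSpace.exp ((0:ℝ) • A) * F = F := by
      simp [NormedSpace.exp_zero]
    have hL' : HasFDerivAt W L (NormedSpace.exp ((0:ℝ) • A) * F) := by
      rw [hγ0]; exact hL
    have h3 : HasDerivAt (fun t : ℝ => W (NormedSpace.exp (t • A) * F)) (L (A * F)) 0 :=
      hL'.comp_hasDerivAt 0 h2
    have h4 : (fun t : ℝ => W (NormedSpace.exp (t • A) * F)) = fun _ => W F :=
      funext hconst
    rw [h4] at h3
    exact h3.unique (hasDerivAt_const 0 (W F))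
  -- Step 2: S * Fᵀ is symmetric
  have htr : ∀ A : Matrix (Fin d) (Fin d) ℝ, Aᵀ = -A →
      Matrix.trace ((F * Sᵀ) * A) = 0 := by
    intro A hA
    have h := key A hA
    rw [hLS] at h
    calc Matrix.trace ((F * Sᵀ) * A) = Matrix.trace ((Sᵀ * A) * F) := by
          rw [Matrix.mul_assoc, Matrix.trace_mul_comm]
      _ = Matrix.trace (Sᵀ * (A * F)) := by rw [Matrix.mul_assoc]
      _ = 0 := h
  have hsymm : S * Fᵀ = F * Sᵀ := by
    set M := S * Fᵀ with hM
    have hMt : F * Sᵀ = Mᵀ := by rw [hM, transpose_mul, transpose_transpose]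
    set A := M - Mᵀ with hAdef
    have hA : Aᵀ = -A := by
      rw [hAdef, transpose_sub, transpose_transpose, neg_sub]
    have h0 : Matrix.trace (Mᵀ * A) = 0 := by rw [← hMt]; exact htr A hA
    have hMA : Matrix.trace (M * A) = 0 := by
      have : Matrix.trace (M * A) = -Matrix.trace (Mᵀ * A) := by
        calc Matrix.trace (M * A) = Matrix.trace ((M * A)ᵀ) := (trace_transpose _).symm
          _ = Matrix.trace (Aᵀ * Mᵀ) := by rw [transpose_mul]
          _ = Matrix.trace (Mᵀ * Aᵀ) := trace_mul_comm _ _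
          _ = -Matrix.trace (Mᵀ * A) := by rw [hA, Matrix.mul_neg, trace_neg]
      rw [this, h0, neg_zero]
    have h1 : Matrix.trace (Aᵀ * A) = 0 := by
      have : Aᵀ * A = Mᵀ * A - M * A := by
        rw [hA, hAdef]; noncomm_ring
      rw [this, trace_sub, h0, hMA, sub_zero]
    have hAzero : A = 0 := by
      have hsum : ∑ i : Fin d, ∑ j : Fin d, A j i * A j i = 0 := by
        simpa [Matrix.trace, Matrix.mul_apply, Matrix.diag, Matrix.transpose_apply] using h1
      ext i j
      have h5 : ∀ i : Fin d, 0 ≤ ∑ j : Fin d, A j i * A j i := fun i =>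
        Finset.sum_nonneg fun j _ => mul_self_nonneg _
      have houter := (Finset.sum_eq_zero_iff_of_nonneg (fun i _ => h5 i)).mp hsum j
        (Finset.mem_univ j)
      have hinner := (Finset.sum_eq_zero_iff_of_nonneg
        (fun k _ => mul_self_nonneg (A k j))).mp houter i (Finset.mem_univ i)
      simpa using mul_self_eq_zero.mp hinner
    have : M = Mᵀ := by
      have := sub_eq_zero.mp hAzero
      exact this
    rw [hM] at this ⊢
    rw [this, transpose_mul, transpose_transpose]
  -- Step 3: algebra
  have hdetu : IsUnit F.det := isUnit_iff_ne_zero.mpr (ne_of_gt hF)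
  have hFFinv : F * F⁻¹ = 1 := Matrix.mul_nonsing_inv F hdetu
  have hFinvF : F⁻¹ * F = 1 := Matrix.nonsing_inv_mul F hdetu
  have hterm2 : Matrix.trace ((F⁻¹ * S)ᵀ * (Fᵀ * Fdot)) = Matrix.trace (Sᵀ * Fdot) := by
    have e2 : (F⁻¹)ᵀ * Fᵀ = 1 := by rw [← transpose_mul, hFFinv, transpose_one]
    rw [transpose_mul]
    simp only [Matrix.mul_assoc]
    rw [← Matrix.mul_assoc (F⁻¹)ᵀ Fᵀ Fdot, e2, Matrix.one_mul]
  have hterm1 : Matrix.trace ((F⁻¹ * S)ᵀ * (Fdotᵀ * F)) = Matrix.trace (Sᵀ * Fdot) := by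
    have e1 : Fᵀ * (F⁻¹)ᵀ = 1 := by rw [← transpose_mul, hFinvF, transpose_one]
    rw [transpose_mul, Matrix.trace_mul_comm]
    simp only [Matrix.mul_assoc]
    rw [← Matrix.mul_assoc F Sᵀ (F⁻¹)ᵀ, ← hsymm, Matrix.mul_assoc S Fᵀ (F⁻¹)ᵀ, e1,
      Matrix.mul_one, ← Matrix.trace_transpose (Fdotᵀ * S), transpose_mul, transpose_transpose]
  rw [Matrix.mul_add, trace_add, hterm1, hterm2]
  ring
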